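/- Every infinite, finitely generated, virtually nilpotent group Γ has infinite FC-centre, i.e., the set of elements of Γ with finite conjugacy class is infinite. -/

import Mathlib

set_option maxHeartbeats 1000000
set_option synthInstance.maxHeartbeats 400000
noncomputable section

open scoped ENNReal

/-- ℓ²(Γ), the Hilbert space of square-summable complex functions on `G`. -/
abbrev l2 (G : Type*) := lp (fun _ : G => ℂ) 2

namespace GroupCstar

lemma two_toReal_pos : 0 < (2 : ℝ≥0∞).toReal := by norm_num

/-- The linear isometry of ℓ² spaces induced by a bijection of index sets,
`f ↦ f ∘ e.symm`. -/
def lpShift {α β : Type*} (e : α ≃ β) : l2 α ≃ₗᵢ[ℂ] l2 β where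
  toFun f := ⟨fun b => f (e.symm b), by
    show Memℓp _ 2
    rw [memℓp_gen_iff two_toReal_pos]
    exact e.symm.summable_iff.2 ((lp.memℓp f).summable two_toReal_pos)⟩
  invFun f := ⟨fun a => f (e a), by
    show Memℓp _ 2
    rw [memℓp_gen_iff two_toReal_pos]
    exact e.summable_iff.2 ((lp.memℓp f).summable two_toReal_pos)⟩
  map_add' f g := rfl
  map_smul' c f := rfl
  left_inv f := by ext a; simp
  right_inv f := by ext b; simp
  norm_map' f := by
    rw [lp.norm_eq_tsum_rpow two_toReal_pos, lp.norm_eq_tsum_rpow two_toReal_pos]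
    congr 1
    exact Equiv.tsum_eq e.symm fun b => ‖f b‖ ^ (2 : ℝ≥0∞).toReal

@[simp] lemma lpShift_apply {α β : Type*} (e : α ≃ β) (f : l2 α) (b : β) :
    (lpShift e f : ∀ _ : β, ℂ) b = f (e.symm b) := rfl

variable (G : Type*) [Group G]

/-- The algebra `B(ℓ²(G))` of bounded operators on `ℓ²(G)`. -/
abbrev B := l2 G →L[ℂ] l2 G

variable {G}

/-- The left regular representation of a group element, as a bounded (unitary) operator on
ℓ²(G): `(leftReg g f) x = f (g⁻¹ * x)`. -/
def leftReg (g : G) : B G :=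
  (lpShift (Equiv.mulLeft g)).toLinearIsometry.toContinuousLinearMap

@[simp] lemma leftReg_apply (g : G) (f : l2 G) (x : G) :
    (leftReg g f : ∀ _ : G, ℂ) x = f (g⁻¹ * x) := rfl

variable (G)

/-- The left regular representation as a monoid homomorphism into bounded operators. -/
def leftRegMonoidHom : G →* B G where
  toFun := leftReg
  map_one' := by ext f x; simp
  map_mul' g h := by ext f x; simp [mul_assoc]

/-- The left regular representation `λ` of the complex group algebra `ℂ[G]` on `ℓ²(G)`,
extending `g ↦ leftReg g` linearly. -/
def lam : MonoidAlgebra ℂ G →ₐ[ℂ] B G :=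
  (MonoidAlgebra.lift ℂ (B G) G) (leftRegMonoidHom G)

/-- δ_e, the canonical trace vector in ℓ²(G). -/
def deltaOne : l2 G :=
  letI := Classical.decEq G
  lp.single 2 (1 : G) (1 : ℂ)

variable {G}

/-- The canonical trace `τ(x) = ⟨x δ_e, δ_e⟩` on `B(ℓ²(G))` (in particular on the group
von Neumann algebra).  Note: with the mathematician's convention (linear in the first
variable) `⟨x δ_e, δ_e⟩` is `inner δ_e (x δ_e)` in Mathlib's convention. -/
def tau (x : B G) : ℂ := inner (𝕜 := ℂ) (deltaOne G) (x (deltaOne G))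

/-- The commutant of a set of bounded operators. -/
def commutant (S : Set (B G)) : Set (B G) := {x | ∀ s ∈ S, s * x = x * s}

variable (G)

/-- The group von Neumann algebra `LG`, realized as the double commutant of `λ(ℂ[G])`
inside `B(ℓ²(G))`. -/
def vN : Set (B G) := commutant (commutant (Set.range (lam G)))

/-- The center `Z(LG)` of the group von Neumann algebra. -/
def vNCenter : Set (B G) := {x | x ∈ vN G ∧ ∀ y ∈ vN G, x * y = y * x}

variable {G}

/-- An orthogonal projection: a self-adjoint idempotent. -/
def IsProjection (p : B G) : Prop := IsSelfAdjoint p ∧ p * p = p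

variable (G)

/-- The central granularity `σ(G)`: the infimum of the traces of the nonzero orthogonal
projections in the center of the group von Neumann algebra. -/
def centralGranularity : ℝ :=
  sInf ((fun p => (tau p).re) '' {p : B G | p ∈ vNCenter G ∧ IsProjection p ∧ p ≠ 0})

/-- The set of orders of finite subgroups of `G`. -/
def finSubgroupOrders : Set ℕ := {n | ∃ H : Subgroup G, Finite H ∧ Nat.card H = n}

open scoped Classical in
/-- The torsion multiplier `θ(G) = 1 / lcm {|H| : H ≤ G finite}`, with the convention
that the lcm of an unbounded set is `∞` and `1/∞ = 0`. -/
def torsionMultiplier : ℝ :=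
  if h : (finSubgroupOrders G).Finite then ((h.toFinset.lcm id : ℕ) : ℝ)⁻¹ else 0

/-- The additive subgroup of `ℝ` generated by the reciprocals of the orders of the finite
subgroups of `G`. -/
def atiyahGroup : AddSubgroup ℝ :=
  AddSubgroup.closure {x : ℝ | ∃ H : Subgroup G, Finite H ∧ x = ((Nat.card H : ℝ))⁻¹}

/-- The operator `L_A` on `ℓ²(G)ⁿ` associated to a matrix `A ∈ Mₙ(ℂ[G])`, given by applying
`λ` entrywise and letting the resulting matrix of operators act. -/
def LA {n : ℕ} (A : Matrix (Fin n) (Fin n) (MonoidAlgebra ℂ G)) :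
    PiLp 2 (fun _ : Fin n => l2 G) →L[ℂ] PiLp 2 (fun _ : Fin n => l2 G) :=
  letI e := PiLp.continuousLinearEquiv 2 ℂ (fun _ : Fin n => l2 G)
  ((e.symm : (∀ _ : Fin n, l2 G) →L[ℂ] PiLp 2 (fun _ : Fin n => l2 G)).comp
      (ContinuousLinearMap.pi fun i =>
        ∑ j, (lam G (A i j)).comp (ContinuousLinearMap.proj j))).comp
    (e : PiLp 2 (fun _ : Fin n => l2 G) →L[ℂ] (∀ _ : Fin n, l2 G))

/-- The vector `δ_e eᵢ` in `ℓ²(G)ⁿ`. -/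
def stdv {n : ℕ} (i : Fin n) : PiLp 2 (fun _ : Fin n => l2 G) :=
  (WithLp.equiv 2 (∀ _ : Fin n, l2 G)).symm (Pi.single i (deltaOne G))

/-- The von Neumann dimension `dim_{LG} ker L_A = Σᵢ ⟨P (δ_e eᵢ), δ_e eᵢ⟩`, where `P` is the
orthogonal projection onto the kernel of `L_A`. -/
def kerDim {n : ℕ} (A : Matrix (Fin n) (Fin n) (MonoidAlgebra ℂ G)) : ℝ :=
  haveI : CompleteSpace (PiLp 2 (fun _ : Fin n => l2 G)) := inferInstance
  haveI : Submodule.HasOrthogonalProjection (LinearMap.ker (LA G A).toLinearMap) :=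
    Submodule.HasOrthogonalProjection.ofCompleteSpace _
  ∑ i, (inner (𝕜 := ℂ)
    ((Submodule.orthogonalProjectionOnto (LinearMap.ker (LA G A).toLinearMap) (stdv G i) :
        PiLp 2 (fun _ : Fin n => l2 G)))
    (stdv G i)).re

/-- `G` satisfies the strong Atiyah conjecture: all von Neumann kernel dimensions of matrices
over `ℂ[G]` lie in the additive subgroup generated by the reciprocals of the orders of finite
subgroups. -/
def SatisfiesStrongAtiyah : Prop :=
  ∀ n : ℕ, 1 ≤ n → ∀ A : Matrix (Fin n) (Fin n) (MonoidAlgebra ℂ G), kerDim G A ∈ atiyahGroup G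

variable {G}

/-- The canonical involution on the complex group algebra: `star (Σ cg·g) = Σ conj(cg)·g⁻¹`. -/
def gaStar (a : MonoidAlgebra ℂ G) : MonoidAlgebra ℂ G :=
  MonoidAlgebra.ofCoeff
    (Finsupp.mapDomain (fun g : G => g⁻¹) (Finsupp.mapRange (starRingEnd ℂ) (map_zero _) a.coeff))

/-- `N` is a C*-norm on the group algebra `ℂ[G]`: a genuine algebra norm satisfying the
C*-identity `N(a* a) = N(a)²`. -/
def IsCstarNorm (N : MonoidAlgebra ℂ G → ℝ) : Prop :=
  (∀ a, 0 ≤ N a) ∧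
  (∀ a, N a = 0 ↔ a = 0) ∧
  (∀ a b, N (a + b) ≤ N a + N b) ∧
  (∀ (c : ℂ) (a), N (c • a) = ‖c‖ * N a) ∧
  (∀ a b, N (a * b) ≤ N a * N b) ∧
  (∀ a, N (gaStar a * a) = N a ^ 2)

variable (G)

/-- `ℂ[G]` is C*_r-unique: no C*-norm on `ℂ[G]` is properly majorized by the reduced norm
`a ↦ ‖λ(a)‖`. -/
def IsCstarRedUnique : Prop :=
  ¬ ∃ N : MonoidAlgebra ℂ G → ℝ, IsCstarNorm N ∧
      (∀ a, N a ≤ ‖lam G a‖) ∧ (∃ a, N a < ‖lam G a‖)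

variable {G}

/-- The conjugacy class of an element. -/
def conjClass (g : G) : Set G := {x | IsConj g x}

variable (G)

/-- The FC-centre: the set of elements with finite conjugacy class. -/
def fcCentre : Set G := {g : G | (conjClass g).Finite}

end GroupCstar


open GroupCstar

open Subgroup

universe u



section AuxSec
variable {G : Type*} [Group G]

/-- If the centralizer of `g` has finite index, the conjugacy class of `g` is finite. -/
lemma conjClass_finite_of_finiteIndex {g : G}
    (h : (Subgroup.centralizer ({g} : Set G)).FiniteIndex) :
    {x : G | IsConj g x}.Finite := by
  haveI := h
  set C := Subgroup.centralizer ({g} : Set G) with hC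
  have wd : ∀ (a b : G), (QuotientGroup.leftRel C) a b →
      a * g * a⁻¹ = b * g * b⁻¹ := by
    intro a b hab
    rw [QuotientGroup.leftRel_apply] at hab
    have hz : g * (a⁻¹ * b) = (a⁻¹ * b) * g := by
      have := Subgroup.mem_centralizer_iff.mp hab g (Set.mem_singleton g)
      exact this
    have : b = a * (a⁻¹ * b) := by group
    rw [this]
    have hcom : (a⁻¹ * b) * g * (a⁻¹ * b)⁻¹ = g := by
      rw [← hz]; group
    calc a * g * a⁻¹ = a * ((a⁻¹ * b) * g * (a⁻¹ * b)⁻¹) * a⁻¹ := by rw [hcom]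
      _ = a * (a⁻¹ * b) * g * (a * (a⁻¹ * b))⁻¹ := by group
  let F : G ⧸ C → G := Quotient.lift (fun c => c * g * c⁻¹) wd
  have hsub : {x : G | IsConj g x} ⊆ Set.range F := by
    intro x hx
    obtain ⟨c, hc⟩ := isConj_iff.mp hx
    exact ⟨QuotientGroup.mk c, hc⟩
  exact (Set.finite_range F).subset hsub

lemma index_map_subtype_ne_zero {H : Subgroup G} (hH : H.FiniteIndex)
    {K : Subgroup ↥H} (hK : K.FiniteIndex) : (K.map H.subtype).index ≠ 0 := by
  rw [← Subgroup.relIndex_mul_index (Subgroup.map_subtype_le K)]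
  apply mul_ne_zero _ hH.index_ne_zero
  have : (K.map H.subtype).subgroupOf H = K := by
    show Subgroup.comap H.subtype (K.map H.subtype) = K
    exact Subgroup.comap_map_eq_self_of_injective H.subtype_injective K
  show ((K.map H.subtype).subgroupOf H).index ≠ 0
  rw [this]
  exact hK.index_ne_zero

end AuxSec


private lemma comm_aux {G : Type*} [Group G] (a b g : G)
    (hc : ∀ x : G, x * (b*g*b⁻¹*g⁻¹) = (b*g*b⁻¹*g⁻¹) * x) :
    a*b*g*(a*b)⁻¹*g⁻¹ = (a*g*a⁻¹*g⁻¹) * (b*g*b⁻¹*g⁻¹) := by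
  have h1 : a*b*g*(a*b)⁻¹*g⁻¹ = a*((b*g*b⁻¹*g⁻¹)*g)*a⁻¹*g⁻¹ := by group
  rw [h1, hc (a*g*a⁻¹*g⁻¹), ← mul_assoc a, hc a]
  simp [mul_assoc]

open scoped commutatorElement in
/-- An infinite f.g. nilpotent group has infinitely many elements with
finite-index centralizer. -/
lemma fc_infinite_of_nilpotent :
    ∀ (n : ℕ) (G : Type u) [Group G] [Group.IsNilpotent G],
      Group.nilpotencyClass G ≤ n → Group.FG G → Infinite G →
      {g : G | (Subgroup.centralizer ({g} : Set G)).FiniteIndex}.Infinite := by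
  intro n
  induction n with
  | zero =>
    intro G _ _ hcls _ hInf
    have hsub : Subsingleton G :=
      nilpotencyClass_zero_iff_subsingleton.mp (Nat.le_zero.mp hcls)
    exact absurd hsub (not_subsingleton G)
  | succ n ih =>
    intro G _ _ hcls hFG hInf
    by_cases hZ : (Subgroup.center G : Set G).Infinite
    · refine hZ.mono ?_
      intro g hg
      have hgc : ∀ b : G, b * g = g * b := Subgroup.mem_center_iff.mp hg
      have : Subgroup.centralizer ({g} : Set G) = ⊤ := by
        rw [eq_top_iff]
        intro x _
        rw [Subgroup.mem_centralizer_iff]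
        intro h hh
        rw [Set.mem_singleton_iff] at hh
        subst hh
        exact (hgc x).symm
      show (Subgroup.centralizer ({g} : Set G)).FiniteIndex
      rw [this]
      infer_instance
    · -- center is finite
      have hZfin : (Subgroup.center G : Set G).Finite := Set.not_infinite.mp hZ
      haveI hZfin' : Finite ↥(Subgroup.center G) := hZfin.to_subtype
      haveI := hFG
      haveI : Infinite (G ⧸ Subgroup.center G) := by
        rw [← Set.infinite_univ_iff]
        by_contra hfin
        rw [Set.not_infinite] at hfin
        haveI : Finite (G ⧸ Subgroup.center G) := Set.finite_univ_iff.mp hfin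
        haveI : Finite G := Finite.of_equiv _
          (Subgroup.groupEquivQuotientProdSubgroup (s := Subgroup.center G)).symm
        exact not_finite G
      have hclsQ : Group.nilpotencyClass (G ⧸ Subgroup.center G) ≤ n := by
        rw [nilpotencyClass_quotient_center]
        omega
      haveI : Group.FG (G ⧸ Subgroup.center G) :=
        Group.fg_of_surjective (QuotientGroup.mk'_surjective (Subgroup.center G))
      have hS := ih (G ⧸ Subgroup.center G) hclsQ inferInstance inferInstance
      set Q := G ⧸ Subgroup.center G with hQdef
      set π := QuotientGroup.mk' (Subgroup.center G) with hπdef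
      have hsub : (π ⁻¹' {q : Q | (Subgroup.centralizer ({q} : Set Q)).FiniteIndex})
          ⊆ {g : G | (Subgroup.centralizer ({g} : Set G)).FiniteIndex} := by
        intro g hg
        have hq : (Subgroup.centralizer ({π g} : Set Q)).FiniteIndex := hg
        set K := (Subgroup.centralizer ({π g} : Set Q)).comap π with hKdef
        haveI hK : K.FiniteIndex := by
          constructor
          rw [hKdef, Subgroup.index_comap_of_surjective _ (QuotientGroup.mk'_surjective (Subgroup.center G))]
          exact hq.index_ne_zero
        -- the commutator map K →* G landing in the center
        have hcen : ∀ k : ↥K, ⁅(k : G), g⁆ ∈ Subgroup.center G := by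
          intro k
          have hk : π (k : G) ∈ Subgroup.centralizer ({π g} : Set Q) := k.2
          have hcomm : π g * π (k : G) = π (k : G) * π g :=
            Subgroup.mem_centralizer_iff.mp hk (π g) (Set.mem_singleton _)
          have : π ⁅(k : G), g⁆ = 1 := by
            rw [commutatorElement_def]
            rw [map_mul, map_mul, map_mul, map_inv, map_inv]
            rw [← hcomm]
            group
          rwa [← QuotientGroup.ker_mk' (Subgroup.center G), MonoidHom.mem_ker]
        have hmul : ∀ k₁ k₂ : ↥K, ⁅((k₁ * k₂ : ↥K) : G), g⁆ = ⁅(k₁ : G), g⁆ * ⁅(k₂ : G), g⁆ := by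
          intro k₁ k₂
          have h2 : ∀ b : G, b * ⁅(k₂ : G), g⁆ = ⁅(k₂ : G), g⁆ * b :=
            Subgroup.mem_center_iff.mp (hcen k₂)
          have h2' : ∀ x : G, x * ((k₂:G)*g*(k₂:G)⁻¹*g⁻¹) = ((k₂:G)*g*(k₂:G)⁻¹*g⁻¹) * x := by
            intro x
            have := h2 x
            rwa [commutatorElement_def] at this
          show ⁅((k₁:G) * (k₂:G) : G), g⁆ = ⁅(k₁ : G), g⁆ * ⁅(k₂ : G), g⁆
          rw [commutatorElement_def, commutatorElement_def, commutatorElement_def]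
          exact comm_aux _ _ _ h2'
        let φ : ↥K →* G :=
          { toFun := fun k => ⁅(k : G), g⁆
            map_one' := by simp
            map_mul' := hmul }
        have hrange : (φ.range : Set G) ⊆ (Subgroup.center G : Set G) := by
          rintro - ⟨k, rfl⟩
          exact hcen k
        haveI : Finite ↥(φ.range) := (hZfin.subset hrange).to_subtype
        haveI : Finite (↥K ⧸ φ.ker) := Finite.of_equiv _ (QuotientGroup.quotientKerEquivRange φ).symm.toEquiv
        haveI hker : φ.ker.FiniteIndex := Subgroup.finiteIndex_of_finite_quotient (H := φ.ker)
        have hL : (φ.ker.map K.subtype).index ≠ 0 := index_map_subtype_ne_zero hK hker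
        have hle : φ.ker.map K.subtype ≤ Subgroup.centralizer ({g} : Set G) := by
          rintro - ⟨k, hk, rfl⟩
          rw [Subgroup.mem_centralizer_iff]
          simp only [Set.mem_singleton_iff, forall_eq]
          have : ⁅(k : G), g⁆ = 1 := hk
          rw [commutatorElement_def] at this
          rw [mul_inv_eq_one] at this
          exact (mul_inv_eq_iff_eq_mul.mp this).symm
        constructor
        intro hzero
        apply hL
        exact Nat.eq_zero_of_zero_dvd (hzero ▸ Subgroup.index_dvd_of_le hle)
      have hpre : (π ⁻¹' {q : Q | (Subgroup.centralizer ({q} : Set Q)).FiniteIndex}).Infinite :=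
        hS.preimage (fun x _ => QuotientGroup.mk'_surjective (Subgroup.center G) x)
      exact hpre.mono hsub


/-- Every infinite, finitely generated, virtually nilpotent group has
infinite FC-centre. -/
theorem fcCentre_infinite_of_infinite_fg_virtually_nilpotent
    (Γ : Type*) [Group Γ] [Infinite Γ] (hfg : Group.FG Γ)
    (hvn : ∃ H : Subgroup Γ, H.FiniteIndex ∧ Group.IsNilpotent ↥H) :
    (fcCentre Γ).Infinite := by
  obtain ⟨H, hHfi, hHnil⟩ := hvn
  haveI := hHfi
  haveI := hHnil
  haveI := hfg
  haveI : Group.FG ↥H := Subgroup.fg_of_index_ne_zero H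
  haveI : Infinite ↥H := by
    by_contra hfin
    rw [not_infinite_iff_finite] at hfin
    haveI : Finite Γ := Finite.of_equiv _
      (Subgroup.groupEquivQuotientProdSubgroup (s := H)).symm
    exact not_finite Γ
  have hS := fc_infinite_of_nilpotent (Group.nilpotencyClass ↥H) ↥H le_rfl
    inferInstance inferInstance
  have himg : ((fun h : ↥H => (h : Γ)) ''
      {h : ↥H | (Subgroup.centralizer ({h} : Set ↥H)).FiniteIndex}).Infinite :=
    hS.image Subtype.coe_injective.injOn
  refine himg.mono ?_
  rintro - ⟨h, hh, rfl⟩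
  show (conjClass ((h : Γ))).Finite
  have hle : (Subgroup.centralizer ({h} : Set ↥H)).map H.subtype ≤
      Subgroup.centralizer ({(h : Γ)} : Set Γ) := by
    rintro - ⟨k, hk, rfl⟩
    rw [Subgroup.mem_centralizer_iff]
    simp only [Set.mem_singleton_iff, forall_eq]
    have hcomm : h * k = k * h :=
      Subgroup.mem_centralizer_iff.mp hk h (Set.mem_singleton _)
    show ((h * k : ↥H) : Γ) = ((k * h : ↥H) : Γ)
    exact congrArg Subtype.val hcomm
  have hcent : (Subgroup.centralizer ({(h : Γ)} : Set Γ)).FiniteIndex := by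
    constructor
    intro hzero
    exact index_map_subtype_ne_zero hHfi hh
      (Nat.eq_zero_of_zero_dvd (hzero ▸ Subgroup.index_dvd_of_le hle))
  exact conjClass_finite_of_finiteIndex hcent
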